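/- Transfer: suppose openproc np onp sr holds, i.e., sr splits each state s of the basic process np i into a global component fst (sr s) and a local component snd (sr s), the technical initial-state conditions of openproc hold, and onp simulates np: whenever (s, a, s') ∈ trans (np i), σ i = fst (sr s), and σ' i = fst (sr s'), then ((σ, snd (sr s)), a, (σ', snd (sr s'))) ∈ trans (onp i). Then for every net_tree n with disjoint addresses (wf_net_tree n) and every state s ∈ reachable (closed (pnet np n)) (λ_. True), the corresponding open state—whose global component maps each address i of n to the global component of node i's state in s (completed outside net_tree_ips n by someinit, an arbitrary element of {fst (sr s₀) | s₀ ∈ init (np i)}), and whose local component is the tree of local components of s—belongs to oreachable (oclosed (opnet onp n)) (λ_ _ _. True) (other (λ_ _. True) (net_tree_ips n)). -/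

import Mathlib

namespace AWN

/-- AWN sequential process terms. -/
inductive Seqp (S PN L IP MSG DATA : Type) : Type where
  | assign  (l : L) (u : S → S) (p : Seqp S PN L IP MSG DATA)
  | guard   (l : L) (g : S → Set S) (p : Seqp S PN L IP MSG DATA)
  | ucast   (l : L) (fip : S → IP) (fmsg : S → MSG) (p q : Seqp S PN L IP MSG DATA)
  | bcast   (l : L) (fmsg : S → MSG) (p : Seqp S PN L IP MSG DATA)
  | gcast   (l : L) (fips : S → Set IP) (fmsg : S → MSG) (p : Seqp S PN L IP MSG DATA)
  | send    (l : L) (fmsg : S → MSG) (p : Seqp S PN L IP MSG DATA)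
  | deliver (l : L) (fdata : S → DATA) (p : Seqp S PN L IP MSG DATA)
  | receive (l : L) (u : MSG → S → S) (p : Seqp S PN L IP MSG DATA)
  | choice  (p q : Seqp S PN L IP MSG DATA)
  | call    (pn : PN)

variable {S PN L IP MSG DATA : Type}

def Seqp.isChoice : Seqp S PN L IP MSG DATA → Prop
  | .choice _ _ => True
  | _ => False

def Seqp.isCall : Seqp S PN L IP MSG DATA → Prop
  | .call _ => True
  | _ => False

/-- The microstep relation `p ↝Γ q`. -/
inductive Microstep (Γ : PN → Seqp S PN L IP MSG DATA) :
    Seqp S PN L IP MSG DATA → Seqp S PN L IP MSG DATA → Prop where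
  | choice_left  {p q : Seqp S PN L IP MSG DATA} : Microstep Γ (.choice p q) p
  | choice_right {p q : Seqp S PN L IP MSG DATA} : Microstep Γ (.choice p q) q
  | call {pn : PN} : Microstep Γ (.call pn) (Γ pn)

/-- A specification is wellformed iff the converse of its microstep relation is wellfounded. -/
def Wellformed (Γ : PN → Seqp S PN L IP MSG DATA) : Prop :=
  WellFounded (fun p q => Microstep Γ q p)

/-- `Sterm Γ p q` holds iff `q ∈ sterms Γ p`: `sterms` unfolds choice and call
and is the singleton `{p}` on prefix terms. -/
inductive Sterm (Γ : PN → Seqp S PN L IP MSG DATA) :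
    Seqp S PN L IP MSG DATA → Seqp S PN L IP MSG DATA → Prop where
  | prefix {p : Seqp S PN L IP MSG DATA} : ¬ p.isChoice → ¬ p.isCall → Sterm Γ p p
  | choice_left  {p q r : Seqp S PN L IP MSG DATA} : Sterm Γ p r → Sterm Γ (.choice p q) r
  | choice_right {p q r : Seqp S PN L IP MSG DATA} : Sterm Γ q r → Sterm Γ (.choice p q) r
  | call {pn : PN} {r : Seqp S PN L IP MSG DATA} : Sterm Γ (Γ pn) r → Sterm Γ (.call pn) r

/-- `sterms Γ p` as a set. -/
def sterms (Γ : PN → Seqp S PN L IP MSG DATA) (p : Seqp S PN L IP MSG DATA) :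
    Set (Seqp S PN L IP MSG DATA) :=
  {q | Sterm Γ p q}

/-- Local start terms. -/
def stermsl : Seqp S PN L IP MSG DATA → Set (Seqp S PN L IP MSG DATA)
  | .choice p q => stermsl p ∪ stermsl q
  | p => {p}

/-- Local control terms. -/
def ctermsl : Seqp S PN L IP MSG DATA → Set (Seqp S PN L IP MSG DATA)
  | .assign l u p => insert (.assign l u p) (ctermsl p)
  | .guard l g p => insert (.guard l g p) (ctermsl p)
  | .ucast l fip fmsg p q => insert (.ucast l fip fmsg p q) (ctermsl p ∪ ctermsl q)
  | .bcast l fmsg p => insert (.bcast l fmsg p) (ctermsl p)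
  | .gcast l fips fmsg p => insert (.gcast l fips fmsg p) (ctermsl p)
  | .send l fmsg p => insert (.send l fmsg p) (ctermsl p)
  | .deliver l fdata p => insert (.deliver l fdata p) (ctermsl p)
  | .receive l u p => insert (.receive l u p) (ctermsl p)
  | .choice p q => ctermsl p ∪ ctermsl q
  | .call pn => {.call pn}

/-- `Dterm Γ p q` holds iff `q ∈ dterms Γ p`, the derivative terms of `p`. -/
inductive Dterm (Γ : PN → Seqp S PN L IP MSG DATA) :
    Seqp S PN L IP MSG DATA → Seqp S PN L IP MSG DATA → Prop where
  | choice_left  {p q r : Seqp S PN L IP MSG DATA} : Dterm Γ p r → Dterm Γ (.choice p q) r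
  | choice_right {p q r : Seqp S PN L IP MSG DATA} : Dterm Γ q r → Dterm Γ (.choice p q) r
  | call {pn : PN} {r : Seqp S PN L IP MSG DATA} : Dterm Γ (Γ pn) r → Dterm Γ (.call pn) r
  | assign {l : L} {u : S → S} {p r : Seqp S PN L IP MSG DATA} :
      Sterm Γ p r → Dterm Γ (.assign l u p) r
  | guard {l : L} {g : S → Set S} {p r : Seqp S PN L IP MSG DATA} :
      Sterm Γ p r → Dterm Γ (.guard l g p) r
  | ucast_left {l : L} {fip : S → IP} {fmsg : S → MSG} {p q r : Seqp S PN L IP MSG DATA} :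
      Sterm Γ p r → Dterm Γ (.ucast l fip fmsg p q) r
  | ucast_right {l : L} {fip : S → IP} {fmsg : S → MSG} {p q r : Seqp S PN L IP MSG DATA} :
      Sterm Γ q r → Dterm Γ (.ucast l fip fmsg p q) r
  | bcast {l : L} {fmsg : S → MSG} {p r : Seqp S PN L IP MSG DATA} :
      Sterm Γ p r → Dterm Γ (.bcast l fmsg p) r
  | gcast {l : L} {fips : S → Set IP} {fmsg : S → MSG} {p r : Seqp S PN L IP MSG DATA} :
      Sterm Γ p r → Dterm Γ (.gcast l fips fmsg p) r
  | send {l : L} {fmsg : S → MSG} {p r : Seqp S PN L IP MSG DATA} :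
      Sterm Γ p r → Dterm Γ (.send l fmsg p) r
  | deliver {l : L} {fdata : S → DATA} {p r : Seqp S PN L IP MSG DATA} :
      Sterm Γ p r → Dterm Γ (.deliver l fdata p) r
  | receive {l : L} {u : MSG → S → S} {p r : Seqp S PN L IP MSG DATA} :
      Sterm Γ p r → Dterm Γ (.receive l u p) r

/-- `dterms Γ p` as a set. -/
def dterms (Γ : PN → Seqp S PN L IP MSG DATA) (p : Seqp S PN L IP MSG DATA) :
    Set (Seqp S PN L IP MSG DATA) :=
  {q | Dterm Γ p q}

/-- `Cterm Γ p` holds iff `p ∈ cterms Γ`, the smallest set containing all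
`sterms Γ (Γ pn)` and closed under `dterms`. -/
inductive Cterm (Γ : PN → Seqp S PN L IP MSG DATA) : Seqp S PN L IP MSG DATA → Prop where
  | sterm {pn : PN} {p : Seqp S PN L IP MSG DATA} : Sterm Γ (Γ pn) p → Cterm Γ p
  | dterm {p q : Seqp S PN L IP MSG DATA} : Cterm Γ p → Dterm Γ p q → Cterm Γ q

/-- `cterms Γ` as a set. -/
def cterms (Γ : PN → Seqp S PN L IP MSG DATA) : Set (Seqp S PN L IP MSG DATA) :=
  {p | Cterm Γ p}

/-- Subterms of a sequential process term. -/
def subterms : Seqp S PN L IP MSG DATA → Set (Seqp S PN L IP MSG DATA)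
  | .assign l u p => insert (.assign l u p) (subterms p)
  | .guard l g p => insert (.guard l g p) (subterms p)
  | .ucast l fip fmsg p q => insert (.ucast l fip fmsg p q) (subterms p ∪ subterms q)
  | .bcast l fmsg p => insert (.bcast l fmsg p) (subterms p)
  | .gcast l fips fmsg p => insert (.gcast l fips fmsg p) (subterms p)
  | .send l fmsg p => insert (.send l fmsg p) (subterms p)
  | .deliver l fdata p => insert (.deliver l fdata p) (subterms p)
  | .receive l u p => insert (.receive l u p) (subterms p)
  | .choice p q => insert (.choice p q) (subterms p ∪ subterms q)
  | .call pn => {.call pn}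



/-- Actions of sequential AWN processes. -/
inductive SeqAction (IP MSG DATA : Type) : Type where
  | broadcast  (m : MSG)
  | groupcast  (ips : Set IP) (m : MSG)
  | unicast    (i : IP) (m : MSG)
  | notunicast (i : IP)
  | send       (m : MSG)
  | deliver    (d : DATA)
  | receive    (m : MSG)
  | tau

variable {S PN L IP MSG DATA : Type}

def SeqAction.isReceive : SeqAction IP MSG DATA → Prop
  | .receive _ => True
  | _ => False

def SeqAction.isSend : SeqAction IP MSG DATA → Prop
  | .send _ => True
  | _ => False

/-- The SOS rules of sequential AWN processes. -/
inductive SeqpSos (Γ : PN → Seqp S PN L IP MSG DATA) :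
    S × Seqp S PN L IP MSG DATA → SeqAction IP MSG DATA → S × Seqp S PN L IP MSG DATA → Prop where
  | assign {ξ : S} {l : L} {u : S → S} {p : Seqp S PN L IP MSG DATA} :
      SeqpSos Γ (ξ, .assign l u p) .tau (u ξ, p)
  | guard {ξ ξ' : S} {l : L} {g : S → Set S} {p : Seqp S PN L IP MSG DATA} :
      ξ' ∈ g ξ → SeqpSos Γ (ξ, .guard l g p) .tau (ξ', p)
  | ucast {ξ : S} {l : L} {fip : S → IP} {fmsg : S → MSG} {p q : Seqp S PN L IP MSG DATA} :
      SeqpSos Γ (ξ, .ucast l fip fmsg p q) (.unicast (fip ξ) (fmsg ξ)) (ξ, p)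
  | notucast {ξ : S} {l : L} {fip : S → IP} {fmsg : S → MSG} {p q : Seqp S PN L IP MSG DATA} :
      SeqpSos Γ (ξ, .ucast l fip fmsg p q) (.notunicast (fip ξ)) (ξ, q)
  | bcast {ξ : S} {l : L} {fmsg : S → MSG} {p : Seqp S PN L IP MSG DATA} :
      SeqpSos Γ (ξ, .bcast l fmsg p) (.broadcast (fmsg ξ)) (ξ, p)
  | gcast {ξ : S} {l : L} {fips : S → Set IP} {fmsg : S → MSG} {p : Seqp S PN L IP MSG DATA} :
      SeqpSos Γ (ξ, .gcast l fips fmsg p) (.groupcast (fips ξ) (fmsg ξ)) (ξ, p)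
  | send {ξ : S} {l : L} {fmsg : S → MSG} {p : Seqp S PN L IP MSG DATA} :
      SeqpSos Γ (ξ, .send l fmsg p) (.send (fmsg ξ)) (ξ, p)
  | deliver {ξ : S} {l : L} {fdata : S → DATA} {p : Seqp S PN L IP MSG DATA} :
      SeqpSos Γ (ξ, .deliver l fdata p) (.deliver (fdata ξ)) (ξ, p)
  | receive {ξ : S} {l : L} {u : MSG → S → S} {p : Seqp S PN L IP MSG DATA} (m : MSG) :
      SeqpSos Γ (ξ, .receive l u p) (.receive m) (u m ξ, p)
  | choice_left {ξ ξ' : S} {p q p' : Seqp S PN L IP MSG DATA} {a : SeqAction IP MSG DATA} :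
      SeqpSos Γ (ξ, p) a (ξ', p') → SeqpSos Γ (ξ, .choice p q) a (ξ', p')
  | choice_right {ξ ξ' : S} {p q p' : Seqp S PN L IP MSG DATA} {a : SeqAction IP MSG DATA} :
      SeqpSos Γ (ξ, q) a (ξ', p') → SeqpSos Γ (ξ, .choice p q) a (ξ', p')
  | call {ξ ξ' : S} {pn : PN} {p' : Seqp S PN L IP MSG DATA} {a : SeqAction IP MSG DATA} :
      SeqpSos Γ (ξ, Γ pn) a (ξ', p') → SeqpSos Γ (ξ, .call pn) a (ξ', p')

/-- An automaton: a set of initial states and a transition relation. -/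
structure Automaton (σ α : Type) : Type where
  init : Set σ
  trans : σ → α → σ → Prop

/-- Reachability under an assumption `I` on actions. -/
inductive Reachable {σ α : Type} (A : Automaton σ α) (I : α → Prop) : σ → Prop where
  | init {s : σ} : s ∈ A.init → Reachable A I s
  | step {s s' : σ} {a : α} : Reachable A I s → A.trans s a s' → I a → Reachable A I s'

/-- Invariance: `A ⊨ (I →) P`. -/
def Invariant {σ α : Type} (A : Automaton σ α) (I : α → Prop) (P : σ → Prop) : Prop :=
  ∀ s, Reachable A I s → P s

/-- Step invariance: `A ⊨A (I →) Q`. -/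
def StepInvariant {σ α : Type} (A : Automaton σ α) (I : α → Prop) (Q : σ → α → σ → Prop) : Prop :=
  ∀ s a s', Reachable A I s → A.trans s a s' → I a → Q s a s'

/-- The label(s) decorating the top-most constructor of a term. -/
def topLabels : Seqp S PN L IP MSG DATA → Set L
  | .assign l _ _ => {l}
  | .guard l _ _ => {l}
  | .ucast l _ _ _ _ => {l}
  | .bcast l _ _ => {l}
  | .gcast l _ _ _ => {l}
  | .send l _ _ => {l}
  | .deliver l _ _ => {l}
  | .receive l _ _ => {l}
  | .choice _ _ => ∅
  | .call _ => ∅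

/-- The labels of the start terms of `p`. -/
def labels (Γ : PN → Seqp S PN L IP MSG DATA) (p : Seqp S PN L IP MSG DATA) : Set L :=
  {l | ∃ q, Sterm Γ p q ∧ l ∈ topLabels q}

/-- `onl Γ P` holds of `(ξ, p)` iff `P (ξ, l)` for every label `l` of `p`. -/
def onl {X : Type} (Γ : PN → Seqp S PN L IP MSG DATA) (P : X × L → Prop)
    (s : X × Seqp S PN L IP MSG DATA) : Prop :=
  ∀ l ∈ labels Γ s.2, P (s.1, l)

/-- All control terms of initial states stem from the specification. -/
def ControlWithin {X : Type} (Γ : PN → Seqp S PN L IP MSG DATA)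
    (I : Set (X × Seqp S PN L IP MSG DATA)) : Prop :=
  ∀ s ∈ I, ∃ pn, s.2 ∈ subterms (Γ pn)

/-- Every subterm of the specification has exactly one label. -/
def SimpleLabels (Γ : PN → Seqp S PN L IP MSG DATA) : Prop :=
  ∀ pn p, p ∈ subterms (Γ pn) → ∃ l, labels Γ p = {l}



/-- Open SOS rules for sequential processes: the state pairs a global state
`σ : IP → S` with a control term, and the rules constrain only entry `i`. -/
inductive OseqpSos (Γ : PN → Seqp S PN L IP MSG DATA) (i : IP) :
    (IP → S) × Seqp S PN L IP MSG DATA → SeqAction IP MSG DATA →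
    (IP → S) × Seqp S PN L IP MSG DATA → Prop where
  | assign {σ σ' : IP → S} {l : L} {u : S → S} {p : Seqp S PN L IP MSG DATA} :
      σ' i = u (σ i) → OseqpSos Γ i (σ, .assign l u p) .tau (σ', p)
  | guard {σ σ' : IP → S} {l : L} {g : S → Set S} {p : Seqp S PN L IP MSG DATA} :
      σ' i ∈ g (σ i) → OseqpSos Γ i (σ, .guard l g p) .tau (σ', p)
  | ucast {σ σ' : IP → S} {l : L} {fip : S → IP} {fmsg : S → MSG}
      {p q : Seqp S PN L IP MSG DATA} :
      σ' i = σ i →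
      OseqpSos Γ i (σ, .ucast l fip fmsg p q) (.unicast (fip (σ i)) (fmsg (σ i))) (σ', p)
  | notucast {σ σ' : IP → S} {l : L} {fip : S → IP} {fmsg : S → MSG}
      {p q : Seqp S PN L IP MSG DATA} :
      σ' i = σ i →
      OseqpSos Γ i (σ, .ucast l fip fmsg p q) (.notunicast (fip (σ i))) (σ', q)
  | bcast {σ σ' : IP → S} {l : L} {fmsg : S → MSG} {p : Seqp S PN L IP MSG DATA} :
      σ' i = σ i → OseqpSos Γ i (σ, .bcast l fmsg p) (.broadcast (fmsg (σ i))) (σ', p)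
  | gcast {σ σ' : IP → S} {l : L} {fips : S → Set IP} {fmsg : S → MSG}
      {p : Seqp S PN L IP MSG DATA} :
      σ' i = σ i →
      OseqpSos Γ i (σ, .gcast l fips fmsg p) (.groupcast (fips (σ i)) (fmsg (σ i))) (σ', p)
  | send {σ σ' : IP → S} {l : L} {fmsg : S → MSG} {p : Seqp S PN L IP MSG DATA} :
      σ' i = σ i → OseqpSos Γ i (σ, .send l fmsg p) (.send (fmsg (σ i))) (σ', p)
  | deliver {σ σ' : IP → S} {l : L} {fdata : S → DATA} {p : Seqp S PN L IP MSG DATA} :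
      σ' i = σ i → OseqpSos Γ i (σ, .deliver l fdata p) (.deliver (fdata (σ i))) (σ', p)
  | receive {σ σ' : IP → S} {l : L} {u : MSG → S → S} {p : Seqp S PN L IP MSG DATA} (m : MSG) :
      σ' i = u m (σ i) → OseqpSos Γ i (σ, .receive l u p) (.receive m) (σ', p)
  | choice_left {σ σ' : IP → S} {p q p' : Seqp S PN L IP MSG DATA} {a : SeqAction IP MSG DATA} :
      OseqpSos Γ i (σ, p) a (σ', p') → OseqpSos Γ i (σ, .choice p q) a (σ', p')
  | choice_right {σ σ' : IP → S} {p q p' : Seqp S PN L IP MSG DATA} {a : SeqAction IP MSG DATA} :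
      OseqpSos Γ i (σ, q) a (σ', p') → OseqpSos Γ i (σ, .choice p q) a (σ', p')
  | call {σ σ' : IP → S} {pn : PN} {p' : Seqp S PN L IP MSG DATA} {a : SeqAction IP MSG DATA} :
      OseqpSos Γ i (σ, Γ pn) a (σ', p') → OseqpSos Γ i (σ, .call pn) a (σ', p')

/-- Open reachability: `S` constrains synchronized steps, `U` interleaved environment steps. -/
inductive Oreachable {G LS α : Type} (A : Automaton (G × LS) α)
    (S : G → G → α → Prop) (U : G → G → Prop) : G × LS → Prop where
  | init {s : G × LS} : s ∈ A.init → Oreachable A S U s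
  | other {σ σ' : G} {ζ : LS} :
      Oreachable A S U (σ, ζ) → U σ σ' → Oreachable A S U (σ', ζ)
  | step {σ σ' : G} {ζ ζ' : LS} {a : α} :
      Oreachable A S U (σ, ζ) → A.trans (σ, ζ) a (σ', ζ') → S σ σ' a →
      Oreachable A S U (σ', ζ')

/-- Open invariance: `A ⊨ (S, U →) P`. -/
def Oinvariant {G LS α : Type} (A : Automaton (G × LS) α)
    (S : G → G → α → Prop) (U : G → G → Prop) (P : G × LS → Prop) : Prop :=
  ∀ s, Oreachable A S U s → P s

/-- Open step invariance: `A ⊨A (S, U →) Q`. -/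
def OstepInvariant {G LS α : Type} (A : Automaton (G × LS) α)
    (S : G → G → α → Prop) (U : G → G → Prop) (Q : (G × LS) → α → (G × LS) → Prop) : Prop :=
  ∀ s a s', Oreachable A S U s → A.trans s a s' → S s.1 s'.1 a → Q s a s'

def otherwith {α : Type} (E : S → S → Prop) (N : Set IP) (I : (IP → S) → α → Prop)
    (σ σ' : IP → S) (a : α) : Prop :=
  (∀ j ∉ N, E (σ j) (σ' j)) ∧ I σ a

def other (F : S → S → Prop) (N : Set IP) (σ σ' : IP → S) : Prop :=
  (∀ j ∈ N, σ' j = σ j) ∧ (∀ j ∉ N, F (σ j) (σ' j))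

def orecvmsg (R : (IP → S) → MSG → Prop) (σ : IP → S) : SeqAction IP MSG DATA → Prop :=
  fun a => ∀ m, a = .receive m → R σ m



/-- Actions at the node and network level. -/
inductive NodeAction (IP MSG DATA : Type) : Type where
  | cast       (R : Set IP) (m : MSG)              -- R:*cast(m)
  | arrive     (H K : Set IP) (m : MSG)            -- H¬K:arrive(m)
  | deliver    (i : IP) (d : DATA)
  | connect    (i i' : IP)
  | disconnect (i i' : IP)
  | tau

/-- The local (non-synchronizing) node actions. -/
def NodeAction.isLocal : NodeAction IP MSG DATA → Prop
  | .tau => True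
  | .deliver _ _ => True
  | _ => False

/-- States of (partial) networks: a tree of node states `s_R`. -/
inductive NetState (PS IP : Type) : Type where
  | node   (i : IP) (s : PS) (R : Set IP)
  | subnet (s t : NetState PS IP)

/-- The addresses occurring in a network state. -/
def netIps {PS : Type} : NetState PS IP → Set IP
  | .node i _ _ => {i}
  | .subnet s t => netIps s ∪ netIps t

/-- Standard node SOS rules, wrapping a process automaton at address `i`. -/
inductive NodeSos {PS : Type} (A : Automaton PS (SeqAction IP MSG DATA)) (i : IP) :
    NetState PS IP → NodeAction IP MSG DATA → NetState PS IP → Prop where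
  | bcast {s s' : PS} {R : Set IP} {m : MSG} :
      A.trans s (.broadcast m) s' → NodeSos A i (.node i s R) (.cast R m) (.node i s' R)
  | gcast {s s' : PS} {R D : Set IP} {m : MSG} :
      A.trans s (.groupcast D m) s' → NodeSos A i (.node i s R) (.cast (R ∩ D) m) (.node i s' R)
  | ucast {s s' : PS} {R : Set IP} {d : IP} {m : MSG} :
      d ∈ R → A.trans s (.unicast d m) s' →
      NodeSos A i (.node i s R) (.cast {d} m) (.node i s' R)
  | notucast {s s' : PS} {R : Set IP} {d : IP} :
      d ∉ R → A.trans s (.notunicast d) s' → NodeSos A i (.node i s R) .tau (.node i s' R)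
  | deliver {s s' : PS} {R : Set IP} {d : DATA} :
      A.trans s (.deliver d) s' → NodeSos A i (.node i s R) (.deliver i d) (.node i s' R)
  | tau {s s' : PS} {R : Set IP} :
      A.trans s .tau s' → NodeSos A i (.node i s R) .tau (.node i s' R)
  | receive {s s' : PS} {R : Set IP} {m : MSG} :
      A.trans s (.receive m) s' →
      NodeSos A i (.node i s R) (.arrive {i} ∅ m) (.node i s' R)
  | not_arrive {s : PS} {R : Set IP} {m : MSG} :
      NodeSos A i (.node i s R) (.arrive ∅ {i} m) (.node i s R)
  | connect_this {s : PS} {R : Set IP} {i' : IP} :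
      NodeSos A i (.node i s R) (.connect i i') (.node i s (R ∪ {i'}))
  | connect_that {s : PS} {R : Set IP} {i' : IP} :
      NodeSos A i (.node i s R) (.connect i' i) (.node i s (R ∪ {i'}))
  | connect_other {s : PS} {R : Set IP} {i' i'' : IP} :
      i ≠ i' → i ≠ i'' →
      NodeSos A i (.node i s R) (.connect i' i'') (.node i s R)
  | disconnect_this {s : PS} {R : Set IP} {i' : IP} :
      NodeSos A i (.node i s R) (.disconnect i i') (.node i s (R \ {i'}))
  | disconnect_that {s : PS} {R : Set IP} {i' : IP} :
      NodeSos A i (.node i s R) (.disconnect i' i) (.node i s (R \ {i'}))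
  | disconnect_other {s : PS} {R : Set IP} {i' i'' : IP} :
      i ≠ i' → i ≠ i'' →
      NodeSos A i (.node i s R) (.disconnect i' i'') (.node i s R)

/-- The node expression `⟨i : A : R₀⟩`. -/
def node {PS : Type} (i : IP) (A : Automaton PS (SeqAction IP MSG DATA)) (R₀ : Set IP) :
    Automaton (NetState PS IP) (NodeAction IP MSG DATA) :=
  ⟨{x | ∃ s ∈ A.init, x = .node i s R₀}, NodeSos A i⟩

/-- Open node SOS rules, over a global state `σ : IP → S`. -/
inductive OnodeSos {PS : Type} (A : Automaton ((IP → S) × PS) (SeqAction IP MSG DATA)) (i : IP) :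
    (IP → S) × NetState PS IP → NodeAction IP MSG DATA → (IP → S) × NetState PS IP → Prop where
  | bcast {σ σ' : IP → S} {s s' : PS} {R : Set IP} {m : MSG} :
      A.trans (σ, s) (.broadcast m) (σ', s') →
      OnodeSos A i (σ, .node i s R) (.cast R m) (σ', .node i s' R)
  | gcast {σ σ' : IP → S} {s s' : PS} {R D : Set IP} {m : MSG} :
      A.trans (σ, s) (.groupcast D m) (σ', s') →
      OnodeSos A i (σ, .node i s R) (.cast (R ∩ D) m) (σ', .node i s' R)
  | ucast {σ σ' : IP → S} {s s' : PS} {R : Set IP} {d : IP} {m : MSG} :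
      d ∈ R → A.trans (σ, s) (.unicast d m) (σ', s') →
      OnodeSos A i (σ, .node i s R) (.cast {d} m) (σ', .node i s' R)
  | notucast {σ σ' : IP → S} {s s' : PS} {R : Set IP} {d : IP} :
      d ∉ R → A.trans (σ, s) (.notunicast d) (σ', s') → (∀ j, j ≠ i → σ' j = σ j) →
      OnodeSos A i (σ, .node i s R) .tau (σ', .node i s' R)
  | deliver {σ σ' : IP → S} {s s' : PS} {R : Set IP} {d : DATA} :
      A.trans (σ, s) (.deliver d) (σ', s') → (∀ j, j ≠ i → σ' j = σ j) →
      OnodeSos A i (σ, .node i s R) (.deliver i d) (σ', .node i s' R)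
  | tau {σ σ' : IP → S} {s s' : PS} {R : Set IP} :
      A.trans (σ, s) .tau (σ', s') → (∀ j, j ≠ i → σ' j = σ j) →
      OnodeSos A i (σ, .node i s R) .tau (σ', .node i s' R)
  | receive {σ σ' : IP → S} {s s' : PS} {R : Set IP} {m : MSG} :
      A.trans (σ, s) (.receive m) (σ', s') →
      OnodeSos A i (σ, .node i s R) (.arrive {i} ∅ m) (σ', .node i s' R)
  | not_arrive {σ σ' : IP → S} {s : PS} {R : Set IP} {m : MSG} :
      σ' i = σ i →
      OnodeSos A i (σ, .node i s R) (.arrive ∅ {i} m) (σ', .node i s R)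
  | connect_this {σ σ' : IP → S} {s : PS} {R : Set IP} {i' : IP} :
      σ' i = σ i →
      OnodeSos A i (σ, .node i s R) (.connect i i') (σ', .node i s (R ∪ {i'}))
  | connect_that {σ σ' : IP → S} {s : PS} {R : Set IP} {i' : IP} :
      σ' i = σ i →
      OnodeSos A i (σ, .node i s R) (.connect i' i) (σ', .node i s (R ∪ {i'}))
  | connect_other {σ σ' : IP → S} {s : PS} {R : Set IP} {i' i'' : IP} :
      i ≠ i' → i ≠ i'' → σ' i = σ i →
      OnodeSos A i (σ, .node i s R) (.connect i' i'') (σ', .node i s R)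
  | disconnect_this {σ σ' : IP → S} {s : PS} {R : Set IP} {i' : IP} :
      σ' i = σ i →
      OnodeSos A i (σ, .node i s R) (.disconnect i i') (σ', .node i s (R \ {i'}))
  | disconnect_that {σ σ' : IP → S} {s : PS} {R : Set IP} {i' : IP} :
      σ' i = σ i →
      OnodeSos A i (σ, .node i s R) (.disconnect i' i) (σ', .node i s (R \ {i'}))
  | disconnect_other {σ σ' : IP → S} {s : PS} {R : Set IP} {i' i'' : IP} :
      i ≠ i' → i ≠ i'' → σ' i = σ i →
      OnodeSos A i (σ, .node i s R) (.disconnect i' i'') (σ', .node i s R)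

/-- The open node expression `⟨i : A : R₀⟩ₒ`. -/
def onode {PS : Type} (i : IP) (A : Automaton ((IP → S) × PS) (SeqAction IP MSG DATA))
    (R₀ : Set IP) : Automaton ((IP → S) × NetState PS IP) (NodeAction IP MSG DATA) :=
  ⟨{x | ∃ σ s, (σ, s) ∈ A.init ∧ x = (σ, .node i s R₀)}, OnodeSos A i⟩

def oarrivemsg (I : (IP → S) → MSG → Prop) (σ : IP → S) : NodeAction IP MSG DATA → Prop :=
  fun a => ∀ H K m, a = .arrive H K m → I σ m



/-! ### Message queues and local parallel composition -/

/-- Transitions of the message queue `qmsg`. -/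
inductive QmsgSos : List MSG → SeqAction IP MSG DATA → List MSG → Prop where
  | receive (q : List MSG) (m : MSG) : QmsgSos q (.receive m) (q ++ [m])
  | send (m : MSG) (q : List MSG) : QmsgSos (m :: q) (.send m) q

/-- The message queue automaton. -/
def qmsg : Automaton (List MSG) (SeqAction IP MSG DATA) :=
  ⟨{[]}, QmsgSos⟩

/-- Standard local parallel composition: receives of `A` synchronize
with sends of `B`, becoming `τ`. -/
inductive ParSos {PS QS : Type} (TA : PS → SeqAction IP MSG DATA → PS → Prop)
    (TB : QS → SeqAction IP MSG DATA → QS → Prop) :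
    PS × QS → SeqAction IP MSG DATA → PS × QS → Prop where
  | left {s s' : PS} {q : QS} {a : SeqAction IP MSG DATA} :
      TA s a s' → ¬ a.isReceive → ParSos TA TB (s, q) a (s', q)
  | right {s : PS} {q q' : QS} {a : SeqAction IP MSG DATA} :
      TB q a q' → ¬ a.isSend → ParSos TA TB (s, q) a (s, q')
  | comm {s s' : PS} {q q' : QS} {m : MSG} :
      TA s (.receive m) s' → TB q (.send m) q' → ParSos TA TB (s, q) .tau (s', q')

/-- `A ⟨⟨ B`. -/
def par {PS QS : Type} (A : Automaton PS (SeqAction IP MSG DATA))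
    (B : Automaton QS (SeqAction IP MSG DATA)) :
    Automaton (PS × QS) (SeqAction IP MSG DATA) :=
  ⟨{x | x.1 ∈ A.init ∧ x.2 ∈ B.init}, ParSos A.trans B.trans⟩

/-- Open local parallel composition with a (closed) automaton `B` on the right:
only the left component constrains the global state. -/
inductive OparSos {G PS QS : Type} (TA : G × PS → SeqAction IP MSG DATA → G × PS → Prop)
    (TB : QS → SeqAction IP MSG DATA → QS → Prop) :
    G × (PS × QS) → SeqAction IP MSG DATA → G × (PS × QS) → Prop where
  | left {σ σ' : G} {s s' : PS} {q : QS} {a : SeqAction IP MSG DATA} :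
      TA (σ, s) a (σ', s') → ¬ a.isReceive → OparSos TA TB (σ, (s, q)) a (σ', (s', q))
  | right {σ : G} {s : PS} {q q' : QS} {a : SeqAction IP MSG DATA} :
      TB q a q' → ¬ a.isSend → OparSos TA TB (σ, (s, q)) a (σ, (s, q'))
  | comm {σ σ' : G} {s s' : PS} {q q' : QS} {m : MSG} :
      TA (σ, s) (.receive m) (σ', s') → TB q (.send m) q' →
      OparSos TA TB (σ, (s, q)) .tau (σ', (s', q'))

/-- `A ⟨⟨ᵢ qmsg`: the open parallel composition of `A` with the message queue. -/
def oparQmsg {G PS : Type} (A : Automaton (G × PS) (SeqAction IP MSG DATA)) :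
    Automaton (G × (PS × List MSG)) (SeqAction IP MSG DATA) :=
  ⟨{x | (x.1, x.2.1) ∈ A.init ∧ x.2.2 = []}, OparSos A.trans (qmsg (IP := IP) (DATA := DATA)).trans⟩

/-! ### Network trees and partial networks -/

/-- Network structure terms. -/
inductive NetTree (IP : Type) : Type where
  | node (i : IP) (R : Set IP)
  | par (t₁ t₂ : NetTree IP)

/-- The addresses of a network tree. -/
def netTreeIps : NetTree IP → Set IP
  | .node i _ => {i}
  | .par t₁ t₂ => netTreeIps t₁ ∪ netTreeIps t₂

/-- Disjointness of the addresses of a network tree. -/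
def WfNetTree : NetTree IP → Prop
  | .node _ _ => True
  | .par t₁ t₂ => netTreeIps t₁ ∩ netTreeIps t₂ = ∅ ∧ WfNetTree t₁ ∧ WfNetTree t₂

/-- Standard SOS rules for (partial) networks. -/
inductive PnetSos {PS : Type}
    (T₁ T₂ : NetState PS IP → NodeAction IP MSG DATA → NetState PS IP → Prop) :
    NetState PS IP → NodeAction IP MSG DATA → NetState PS IP → Prop where
  | cast_left {s s' t t' : NetState PS IP} {R H K : Set IP} {m : MSG} :
      T₁ s (.cast R m) s' → T₂ t (.arrive H K m) t' → H ⊆ R → K ∩ R = ∅ →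
      PnetSos T₁ T₂ (.subnet s t) (.cast R m) (.subnet s' t')
  | cast_right {s s' t t' : NetState PS IP} {R H K : Set IP} {m : MSG} :
      T₁ s (.arrive H K m) s' → T₂ t (.cast R m) t' → H ⊆ R → K ∩ R = ∅ →
      PnetSos T₁ T₂ (.subnet s t) (.cast R m) (.subnet s' t')
  | arrive {s s' t t' : NetState PS IP} {H₁ K₁ H₂ K₂ : Set IP} {m : MSG} :
      T₁ s (.arrive H₁ K₁ m) s' → T₂ t (.arrive H₂ K₂ m) t' →
      PnetSos T₁ T₂ (.subnet s t) (.arrive (H₁ ∪ H₂) (K₁ ∪ K₂) m) (.subnet s' t')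
  | tau_left {s s' t : NetState PS IP} :
      T₁ s .tau s' → PnetSos T₁ T₂ (.subnet s t) .tau (.subnet s' t)
  | tau_right {s t t' : NetState PS IP} :
      T₂ t .tau t' → PnetSos T₁ T₂ (.subnet s t) .tau (.subnet s t')
  | deliver_left {s s' t : NetState PS IP} {i : IP} {d : DATA} :
      T₁ s (.deliver i d) s' → PnetSos T₁ T₂ (.subnet s t) (.deliver i d) (.subnet s' t)
  | deliver_right {s t t' : NetState PS IP} {i : IP} {d : DATA} :
      T₂ t (.deliver i d) t' → PnetSos T₁ T₂ (.subnet s t) (.deliver i d) (.subnet s t')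
  | connect {s s' t t' : NetState PS IP} {i i' : IP} :
      T₁ s (.connect i i') s' → T₂ t (.connect i i') t' →
      PnetSos T₁ T₂ (.subnet s t) (.connect i i') (.subnet s' t')
  | disconnect {s s' t t' : NetState PS IP} {i i' : IP} :
      T₁ s (.disconnect i i') s' → T₂ t (.disconnect i i') t' →
      PnetSos T₁ T₂ (.subnet s t) (.disconnect i i') (.subnet s' t')

/-- The standard network automaton of a network tree. -/
def pnet {PS : Type} (np : IP → Automaton PS (SeqAction IP MSG DATA)) :
    NetTree IP → Automaton (NetState PS IP) (NodeAction IP MSG DATA)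
  | .node i R => node i (np i) R
  | .par t₁ t₂ =>
      ⟨{x | ∃ s t, s ∈ (pnet np t₁).init ∧ t ∈ (pnet np t₂).init ∧ x = .subnet s t},
       PnetSos (pnet np t₁).trans (pnet np t₂).trans⟩

/-- Open SOS rules for (partial) networks. -/
inductive OpnetSos {PS : Type}
    (T₁ T₂ : (IP → S) × NetState PS IP → NodeAction IP MSG DATA →
             (IP → S) × NetState PS IP → Prop) :
    (IP → S) × NetState PS IP → NodeAction IP MSG DATA → (IP → S) × NetState PS IP → Prop where
  | cast_left {σ σ' : IP → S} {s s' t t' : NetState PS IP} {R H K : Set IP} {m : MSG} :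
      T₁ (σ, s) (.cast R m) (σ', s') → T₂ (σ, t) (.arrive H K m) (σ', t') →
      H ⊆ R → K ∩ R = ∅ →
      OpnetSos T₁ T₂ (σ, .subnet s t) (.cast R m) (σ', .subnet s' t')
  | cast_right {σ σ' : IP → S} {s s' t t' : NetState PS IP} {R H K : Set IP} {m : MSG} :
      T₁ (σ, s) (.arrive H K m) (σ', s') → T₂ (σ, t) (.cast R m) (σ', t') →
      H ⊆ R → K ∩ R = ∅ →
      OpnetSos T₁ T₂ (σ, .subnet s t) (.cast R m) (σ', .subnet s' t')
  | arrive {σ σ' : IP → S} {s s' t t' : NetState PS IP} {H₁ K₁ H₂ K₂ : Set IP} {m : MSG} :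
      T₁ (σ, s) (.arrive H₁ K₁ m) (σ', s') → T₂ (σ, t) (.arrive H₂ K₂ m) (σ', t') →
      OpnetSos T₁ T₂ (σ, .subnet s t) (.arrive (H₁ ∪ H₂) (K₁ ∪ K₂) m) (σ', .subnet s' t')
  | tau_left {σ σ' : IP → S} {s s' t : NetState PS IP} :
      T₁ (σ, s) .tau (σ', s') → (∀ j ∈ netIps t, σ' j = σ j) →
      OpnetSos T₁ T₂ (σ, .subnet s t) .tau (σ', .subnet s' t)
  | tau_right {σ σ' : IP → S} {s t t' : NetState PS IP} :
      T₂ (σ, t) .tau (σ', t') → (∀ j ∈ netIps s, σ' j = σ j) →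
      OpnetSos T₁ T₂ (σ, .subnet s t) .tau (σ', .subnet s t')
  | deliver_left {σ σ' : IP → S} {s s' t : NetState PS IP} {i : IP} {d : DATA} :
      T₁ (σ, s) (.deliver i d) (σ', s') → (∀ j ∈ netIps t, σ' j = σ j) →
      OpnetSos T₁ T₂ (σ, .subnet s t) (.deliver i d) (σ', .subnet s' t)
  | deliver_right {σ σ' : IP → S} {s t t' : NetState PS IP} {i : IP} {d : DATA} :
      T₂ (σ, t) (.deliver i d) (σ', t') → (∀ j ∈ netIps s, σ' j = σ j) →
      OpnetSos T₁ T₂ (σ, .subnet s t) (.deliver i d) (σ', .subnet s t')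
  | connect {σ σ' : IP → S} {s s' t t' : NetState PS IP} {i i' : IP} :
      T₁ (σ, s) (.connect i i') (σ', s') → T₂ (σ, t) (.connect i i') (σ', t') →
      OpnetSos T₁ T₂ (σ, .subnet s t) (.connect i i') (σ', .subnet s' t')
  | disconnect {σ σ' : IP → S} {s s' t t' : NetState PS IP} {i i' : IP} :
      T₁ (σ, s) (.disconnect i i') (σ', s') → T₂ (σ, t) (.disconnect i i') (σ', t') →
      OpnetSos T₁ T₂ (σ, .subnet s t) (.disconnect i i') (σ', .subnet s' t')

/-- The open network automaton of a network tree. -/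
def opnet {PS : Type} (onp : IP → Automaton ((IP → S) × PS) (SeqAction IP MSG DATA)) :
    NetTree IP → Automaton ((IP → S) × NetState PS IP) (NodeAction IP MSG DATA)
  | .node i R => onode i (onp i) R
  | .par t₁ t₂ =>
      ⟨{x | ∃ σ s t, (σ, s) ∈ (opnet onp t₁).init ∧ (σ, t) ∈ (opnet onp t₂).init ∧
            x = (σ, .subnet s t)},
       OpnetSos (opnet onp t₁).trans (opnet onp t₂).trans⟩

/-! ### Closed networks -/

/-- SOS rules closing a network: `*cast` becomes `τ`, `arrive` is forbidden. -/
inductive CnetSos {NS : Type} (T : NS → NodeAction IP MSG DATA → NS → Prop) :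
    NS → NodeAction IP MSG DATA → NS → Prop where
  | cast {s s' : NS} {R : Set IP} {m : MSG} : T s (.cast R m) s' → CnetSos T s .tau s'
  | tau {s s' : NS} : T s .tau s' → CnetSos T s .tau s'
  | deliver {s s' : NS} {i : IP} {d : DATA} :
      T s (.deliver i d) s' → CnetSos T s (.deliver i d) s'
  | connect {s s' : NS} {i i' : IP} :
      T s (.connect i i') s' → CnetSos T s (.connect i i') s'
  | disconnect {s s' : NS} {i i' : IP} :
      T s (.disconnect i i') s' → CnetSos T s (.disconnect i i') s'

/-- The closed network automaton. -/
def closed {NS : Type} (A : Automaton NS (NodeAction IP MSG DATA)) :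
    Automaton NS (NodeAction IP MSG DATA) :=
  ⟨A.init, CnetSos A.trans⟩

/-- Open SOS rules closing a network: additionally, global entries not
addressed within the network may not change. -/
inductive OcnetSos {LS : Type}
    (T : (IP → S) × NetState LS IP → NodeAction IP MSG DATA →
         (IP → S) × NetState LS IP → Prop) :
    (IP → S) × NetState LS IP → NodeAction IP MSG DATA → (IP → S) × NetState LS IP → Prop where
  | cast {σ σ' : IP → S} {s s' : NetState LS IP} {R : Set IP} {m : MSG} :
      (∀ j ∉ netIps s, σ' j = σ j) → T (σ, s) (.cast R m) (σ', s') →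
      OcnetSos T (σ, s) .tau (σ', s')
  | tau {σ σ' : IP → S} {s s' : NetState LS IP} :
      (∀ j ∉ netIps s, σ' j = σ j) → T (σ, s) .tau (σ', s') →
      OcnetSos T (σ, s) .tau (σ', s')
  | deliver {σ σ' : IP → S} {s s' : NetState LS IP} {i : IP} {d : DATA} :
      (∀ j ∉ netIps s, σ' j = σ j) → T (σ, s) (.deliver i d) (σ', s') →
      OcnetSos T (σ, s) (.deliver i d) (σ', s')
  | connect {σ σ' : IP → S} {s s' : NetState LS IP} {i i' : IP} :
      (∀ j ∉ netIps s, σ' j = σ j) → T (σ, s) (.connect i i') (σ', s') →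
      OcnetSos T (σ, s) (.connect i i') (σ', s')
  | disconnect {σ σ' : IP → S} {s s' : NetState LS IP} {i i' : IP} :
      (∀ j ∉ netIps s, σ' j = σ j) → T (σ, s) (.disconnect i i') (σ', s') →
      OcnetSos T (σ, s) (.disconnect i i') (σ', s')

/-- The closed open-network automaton. -/
def oclosed {LS : Type} (A : Automaton ((IP → S) × NetState LS IP) (NodeAction IP MSG DATA)) :
    Automaton ((IP → S) × NetState LS IP) (NodeAction IP MSG DATA) :=
  ⟨A.init, OcnetSos A.trans⟩

/-! ### The openproc locale -/

/-- The `openproc` locale: `sr` splits states of `np i` into a global and a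
local component, the initial states correspond, and `onp` simulates `np`. -/
structure Openproc {PS LS : Type} (np : IP → Automaton PS (SeqAction IP MSG DATA))
    (onp : IP → Automaton ((IP → S) × LS) (SeqAction IP MSG DATA))
    (sr : PS → S × LS) : Prop where
  init : ∀ (i : IP) (σ : IP → S) (ζ : LS),
      (∃ s ∈ (np i).init, (σ i, ζ) = sr s) →
      (∀ j, j ≠ i → ∃ s ∈ (np j).init, σ j = (sr s).1) →
      (σ, ζ) ∈ (onp i).init
  init_notempty : ∀ j, ((np j).init).Nonempty
  sim : ∀ (i : IP) (s s' : PS) (a : SeqAction IP MSG DATA) (σ σ' : IP → S),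
      (np i).trans s a s' → σ i = (sr s).1 → σ' i = (sr s').1 →
      (onp i).trans (σ, (sr s).2) a (σ', (sr s').2)

/-- An arbitrary initial global component for `np i`. -/
noncomputable def someinit {PS LS : Type} [Nonempty S]
    (np : IP → Automaton PS (SeqAction IP MSG DATA)) (sr : PS → S × LS) (i : IP) : S :=
  Classical.epsilon fun x => ∃ s ∈ (np i).init, x = (sr s).1

/-- The partial map from addresses to global components of node states. -/
def netlift {PS LS : Type} [DecidableEq IP] (sr : PS → S × LS) :
    NetState PS IP → IP → Option S
  | .node i s _ => fun j => if j = i then some (sr s).1 else none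
  | .subnet s t => fun j => (netlift sr s j).orElse (fun _ => netlift sr t j)

/-- The tree of local components of a network state. -/
def netliftl {PS LS : Type} (sr : PS → S × LS) : NetState PS IP → NetState LS IP
  | .node i s R => .node i (sr s).2 R
  | .subnet s t => .subnet (netliftl sr s) (netliftl sr t)

/-- The open state corresponding to a standard network state. -/
noncomputable def netgmap {PS LS : Type} [DecidableEq IP] [Nonempty S]
    (np : IP → Automaton PS (SeqAction IP MSG DATA)) (sr : PS → S × LS)
    (s : NetState PS IP) : (IP → S) × NetState LS IP :=
  ((fun j => (netlift sr s j).getD (someinit np sr j)), netliftl sr s)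



/-! ### The toy protocol -/

/-- Messages of the toy protocol. -/
inductive ToyMsg : Type where
  | newpkt (data dst : ℕ)
  | pkt (data src : ℕ)

/-- Data states of the toy protocol. -/
structure ToyState : Type where
  ip : ℕ
  no : ℕ
  num : ℕ
  sip : ℕ
  nhip : ℕ
  msg : ToyMsg

/-- The single process name of the toy protocol. -/
inductive ToyPN : Type where
  | PToy

abbrev ToySeqp : Type := Seqp ToyState ToyPN ℕ ℕ ToyMsg ℕ

/-- The `is_newpkt` guard: succeeds iff `msg ξ = newpkt d dst`, setting `num := d`. -/
def isNewpkt : ToyState → Set ToyState := fun ξ =>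
  {ξ' | ∃ d dst, ξ.msg = .newpkt d dst ∧ ξ' = { ξ with num := d }}

/-- The `is_pkt` guard: succeeds iff `msg ξ = pkt d src`, setting `num := d`, `sip := src`. -/
def isPkt : ToyState → Set ToyState := fun ξ =>
  {ξ' | ∃ d src, ξ.msg = .pkt d src ∧ ξ' = { ξ with num := d, sip := src }}

/-- `Toy()`: reset the local variables `msg`, `num` and `sip` to fixed
defaults and call `PToy`; `l` is the label of the resetting assignment. -/
def toyReset (l : ℕ) : ToySeqp :=
  .assign l (fun ξ => { ξ with msg := .newpkt 0 0, num := 0, sip := 0 }) (.call .PToy)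

/-- The specification `Γ_Toy` of the toy protocol. -/
def toySpec : ToyPN → ToySeqp := fun _ =>
  .receive 0 (fun m ξ => { ξ with msg := m }) <|
  .assign 1 (fun ξ => { ξ with nhip := ξ.ip }) <|
  .choice
    (.guard 2 isNewpkt <|
      .assign 3 (fun ξ => { ξ with no := max ξ.no ξ.num }) <|
      .bcast 4 (fun ξ => .pkt ξ.no ξ.ip) <| toyReset 5)
    (.guard 2 isPkt <|
      .choice
        (.guard 6 (fun ξ => if ξ.num ≥ ξ.no then {ξ} else ∅) <|
          .assign 7 (fun ξ => { ξ with no := ξ.num }) <|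
          .assign 8 (fun ξ => { ξ with nhip := ξ.sip }) <|
          .bcast 9 (fun ξ => .pkt ξ.no ξ.ip) <| toyReset 10)
        (.guard 6 (fun ξ => if ξ.num < ξ.no then {ξ} else ∅) <| toyReset 11))

/-- The initial data state of node `i`. -/
def toyInit (i : ℕ) : ToyState :=
  { ip := i, no := 0, num := 0, sip := 0, nhip := i, msg := .newpkt 0 0 }

instance : Nonempty ToyState := ⟨toyInit 0⟩

/-- The sequential toy-protocol automaton at address `i`. -/
def ptoy (i : ℕ) : Automaton (ToyState × ToySeqp) (SeqAction ℕ ToyMsg ℕ) :=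
  ⟨{(toyInit i, toySpec .PToy)}, fun s a s' => SeqpSos toySpec s a s'⟩

/-- The open sequential toy-protocol automaton at address `i`. -/
def optoy (i : ℕ) : Automaton ((ℕ → ToyState) × ToySeqp) (SeqAction ℕ ToyMsg ℕ) :=
  ⟨{x | x.1 i = toyInit i ∧ x.2 = toySpec .PToy}, fun s a s' => OseqpSos toySpec i s a s'⟩

/-- The `no` field never decreases. -/
def nosIncrease (ξ ξ' : ToyState) : Prop := ξ.no ≤ ξ'.no

/-- Incoming `pkt` messages reflect the state of the sender. -/
def msgNumOk (σ : ℕ → ToyState) : ToyMsg → Prop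
  | .pkt d src => d ≤ (σ src).no
  | .newpkt _ _ => True

/-- `sr` for the toy protocol composed with `qmsg`. -/
def srToy : (ToyState × ToySeqp) × List ToyMsg → ToyState × (ToySeqp × List ToyMsg) :=
  fun s => (s.1.1, (s.1.2, s.2))

/-- Lift a predicate on global states to standard toy network states. -/
def toyNetglobal (P : (ℕ → ToyState) → Prop)
    (s : NetState ((ToyState × ToySeqp) × List ToyMsg) ℕ) : Prop :=
  P (fun j => ((netlift srToy s) j).getD (toyInit j))


/-! ### Auxiliary development for the transfer lemma -/

section TransferAux

/-- Structural matching between a network tree and a network state. -/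
def NetMatch {IP PS : Type} : NetTree IP → NetState PS IP → Prop
  | .node i _, .node j _ _ => j = i
  | .par t₁ t₂, .subnet u v => NetMatch t₁ u ∧ NetMatch t₂ v
  | _, _ => False

variable {S PS LS IP MSG DATA : Type} [DecidableEq IP]

lemma netMatch_ips {n : NetTree IP} {s : NetState PS IP} (h : NetMatch n s) :
    netIps s = netTreeIps n := by
  induction n generalizing s with
  | node i R =>
    cases s with
    | node j ps R' =>
      have hji : j = i := h
      subst hji; rfl
    | subnet _ _ => exact h.elim
  | par t₁ t₂ ih₁ ih₂ =>
    cases s with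
    | node _ _ _ => exact h.elim
    | subnet u v =>
      obtain ⟨h₁, h₂⟩ := h
      show netIps u ∪ netIps v = _
      rw [ih₁ h₁, ih₂ h₂]; rfl

lemma netlift_none {sr : PS → S × LS} {n : NetTree IP} {s : NetState PS IP}
    (h : NetMatch n s) {j : IP} (hj : j ∉ netTreeIps n) : netlift sr s j = none := by
  induction n generalizing s with
  | node i R =>
    cases s with
    | node k ps R' =>
      have hki : k = i := h
      subst hki
      have hne : j ≠ k := fun hc => hj hc
      simp [netlift, hne]
    | subnet _ _ => exact h.elim
  | par t₁ t₂ ih₁ ih₂ =>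
    cases s with
    | node _ _ _ => exact h.elim
    | subnet u v =>
      obtain ⟨h₁, h₂⟩ := h
      have hj₁ : j ∉ netTreeIps t₁ := fun hc => hj (Or.inl hc)
      have hj₂ : j ∉ netTreeIps t₂ := fun hc => hj (Or.inr hc)
      show ((netlift sr u j).orElse fun _ => netlift sr v j) = none
      rw [ih₁ h₁ hj₁, ih₂ h₂ hj₂]; rfl

lemma netlift_isSome {sr : PS → S × LS} {n : NetTree IP} {s : NetState PS IP}
    (h : NetMatch n s) {j : IP} (hj : j ∈ netTreeIps n) : ∃ x, netlift sr s j = some x := by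
  induction n generalizing s with
  | node i R =>
    cases s with
    | node k ps R' =>
      have hki : k = i := h
      subst hki
      have hji : j = k := hj
      exact ⟨(sr ps).1, by simp [netlift, hji]⟩
    | subnet _ _ => exact h.elim
  | par t₁ t₂ ih₁ ih₂ =>
    cases s with
    | node _ _ _ => exact h.elim
    | subnet u v =>
      obtain ⟨h₁, h₂⟩ := h
      show ∃ x, ((netlift sr u j).orElse fun _ => netlift sr v j) = some x
      cases hu : netlift sr u j with
      | some y => exact ⟨y, rfl⟩
      | none =>
        rcases hj with hj | hj
        · obtain ⟨x, hx⟩ := ih₁ h₁ hj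
          rw [hu] at hx; cases hx
        · obtain ⟨x, hx⟩ := ih₂ h₂ hj
          exact ⟨x, hx⟩

lemma netlift_mem {sr : PS → S × LS} {n : NetTree IP} {s : NetState PS IP}
    (h : NetMatch n s) {j : IP} {x : S} (hx : netlift sr s j = some x) :
    j ∈ netTreeIps n := by
  by_contra hj
  rw [netlift_none h hj] at hx
  cases hx

lemma netlift_subnet_some {sr : PS → S × LS} {u v : NetState PS IP} {j : IP} {x : S}
    (h : netlift sr u j = some x) :
    netlift (LS := LS) sr (.subnet u v) j = some x := by
  show ((netlift sr u j).orElse fun _ => netlift sr v j) = some x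
  rw [h]; rfl

lemma netlift_subnet_none {sr : PS → S × LS} {u v : NetState PS IP} {j : IP}
    (h : netlift sr u j = none) :
    netlift (LS := LS) sr (.subnet u v) j = netlift sr v j := by
  show ((netlift sr u j).orElse fun _ => netlift sr v j) = netlift sr v j
  rw [h]; rfl

lemma netIps_netliftl {sr : PS → S × LS} (s : NetState PS IP) :
    netIps (netliftl sr s) = netIps s := by
  induction s with
  | node i ps R => rfl
  | subnet u v ih₁ ih₂ =>
    show netIps (netliftl sr u) ∪ netIps (netliftl sr v) = _
    rw [ih₁, ih₂]; rfl

/-- Restrict a global-agreement hypothesis on a subnet to its left part. -/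
lemma restrict_left {sr : PS → S × LS} {u v : NetState PS IP} {σ : IP → S}
    (h : ∀ j x, netlift (LS := LS) sr (.subnet u v) j = some x → σ j = x) :
    ∀ j x, netlift sr u j = some x → σ j = x :=
  fun j x hx => h j x (netlift_subnet_some hx)

/-- Restrict a global-agreement hypothesis on a subnet to its right part. -/
lemma restrict_right {sr : PS → S × LS} {t₁ t₂ : NetTree IP} {u v : NetState PS IP} {σ : IP → S}
    (m₁ : NetMatch t₁ u) (m₂ : NetMatch t₂ v)
    (hd : ∀ j, j ∈ netTreeIps t₂ → j ∉ netTreeIps t₁)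
    (h : ∀ j x, netlift (LS := LS) sr (.subnet u v) j = some x → σ j = x) :
    ∀ j x, netlift sr v j = some x → σ j = x := by
  intro j x hx
  have hu := netlift_none (sr := sr) m₁ (hd j (netlift_mem m₂ hx))
  exact h j x (by rw [netlift_subnet_none hu]; exact hx)

/-- For a local step on the left part: the hypothesis passes down and the
right-part side condition holds. -/
lemma pass_left {sr : PS → S × LS} {t₁ t₂ : NetTree IP} {u u' v : NetState PS IP} {σ σ' : IP → S}
    (m₁ : NetMatch t₁ u) (m₁' : NetMatch t₁ u') (m₂ : NetMatch t₂ v)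
    (hd : ∀ j, j ∈ netTreeIps t₂ → j ∉ netTreeIps t₁)
    (h1 : ∀ j x, netlift (LS := LS) sr (.subnet u v) j = some x → σ j = x)
    (h2 : ∀ j x, netlift (LS := LS) sr (.subnet u' v) j = some x → σ' j = x)
    (h3 : ∀ j, netlift (LS := LS) sr (.subnet u v) j = none → σ' j = σ j) :
    (∀ j, netlift sr u j = none → σ' j = σ j) ∧ (∀ j ∈ netTreeIps t₂, σ' j = σ j) := by
  have key : ∀ j ∈ netTreeIps t₂, σ' j = σ j := by
    intro j hj
    obtain ⟨x, hx⟩ := netlift_isSome (sr := sr) m₂ hj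
    have hu := netlift_none (sr := sr) m₁ (hd j hj)
    have hu' := netlift_none (sr := sr) m₁' (hd j hj)
    rw [h1 j x (by rw [netlift_subnet_none hu]; exact hx),
        h2 j x (by rw [netlift_subnet_none hu']; exact hx)]
  refine ⟨?_, key⟩
  intro j hj
  cases hv : netlift (sr := sr) v j with
  | some x => exact key j (netlift_mem m₂ hv)
  | none => exact h3 j (by rw [netlift_subnet_none hj]; exact hv)

/-- For a local step on the right part. -/
lemma pass_right {sr : PS → S × LS} {t₁ : NetTree IP} {u v v' : NetState PS IP} {σ σ' : IP → S}
    (m₁ : NetMatch t₁ u)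
    (h1 : ∀ j x, netlift (LS := LS) sr (.subnet u v) j = some x → σ j = x)
    (h2 : ∀ j x, netlift (LS := LS) sr (.subnet u v') j = some x → σ' j = x)
    (h3 : ∀ j, netlift (LS := LS) sr (.subnet u v) j = none → σ' j = σ j) :
    (∀ j, netlift sr v j = none → σ' j = σ j) ∧ (∀ j ∈ netTreeIps t₁, σ' j = σ j) := by
  have key0 : ∀ j x, netlift sr u j = some x → σ' j = σ j := by
    intro j x hx
    rw [h1 j x (netlift_subnet_some hx), h2 j x (netlift_subnet_some hx)]
  have key : ∀ j ∈ netTreeIps t₁, σ' j = σ j := by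
    intro j hj
    obtain ⟨x, hx⟩ := netlift_isSome (sr := sr) m₁ hj
    exact key0 j x hx
  refine ⟨?_, key⟩
  intro j hj
  cases hu : netlift (sr := sr) u j with
  | some x => exact key0 j x hu
  | none => exact h3 j (by rw [netlift_subnet_none hu]; exact hj)

variable {np : IP → Automaton PS (SeqAction IP MSG DATA)}
  {onp : IP → Automaton ((IP → S) × LS) (SeqAction IP MSG DATA)}
  {sr : PS → S × LS}

/-- Lifting initial states. -/
lemma lift_init (hop : Openproc np onp sr) :
    ∀ (n : NetTree IP), WfNetTree n → ∀ s ∈ (pnet np n).init,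
      NetMatch n s ∧
      (∀ j x, netlift sr s j = some x → ∃ s0 ∈ (np j).init, x = (sr s0).1) ∧
      ∀ σ : IP → S, (∀ j x, netlift sr s j = some x → σ j = x) →
        (∀ j, ∃ s0 ∈ (np j).init, σ j = (sr s0).1) →
        (σ, netliftl sr s) ∈ (opnet onp n).init := by
  intro n
  induction n with
  | node i R =>
    intro _ s hs
    obtain ⟨s0, hs0, rfl⟩ := hs
    have hlift : netlift sr (NetState.node i s0 R) i = some (sr s0).1 := by simp [netlift]
    refine ⟨rfl, ?_, ?_⟩
    · intro j x hx
      by_cases hji : j = i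
      · subst hji
        rw [hlift] at hx
        exact ⟨s0, hs0, (Option.some.inj hx).symm⟩
      · simp [netlift, hji] at hx
    · intro σ h1 h2
      refine ⟨σ, (sr s0).2, ?_, rfl⟩
      refine hop.init i σ (sr s0).2 ⟨s0, hs0, ?_⟩ (fun j _ => h2 j)
      rw [h1 i (sr s0).1 hlift]
  | par t₁ t₂ ih₁ ih₂ =>
    intro hwf s hs
    obtain ⟨hdisj, hwf₁, hwf₂⟩ := hwf
    obtain ⟨u, v, hu, hv, rfl⟩ := hs
    obtain ⟨m₁, i₁, f₁⟩ := ih₁ hwf₁ u hu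
    obtain ⟨m₂, i₂, f₂⟩ := ih₂ hwf₂ v hv
    have hd : ∀ j, j ∈ netTreeIps t₂ → j ∉ netTreeIps t₁ := fun j hj hj' =>
      Set.eq_empty_iff_forall_notMem.mp hdisj j ⟨hj', hj⟩
    refine ⟨⟨m₁, m₂⟩, ?_, ?_⟩
    · intro j x hx
      cases hu' : netlift sr u j with
      | some y =>
        rw [netlift_subnet_some hu'] at hx
        exact (Option.some.inj hx) ▸ i₁ j y hu'
      | none =>
        rw [netlift_subnet_none hu'] at hx
        exact i₂ j x hx
    · intro σ h1 h2
      exact ⟨σ, netliftl sr u, netliftl sr v,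
        f₁ σ (restrict_left h1) h2, f₂ σ (restrict_right m₁ m₂ hd h1) h2, rfl⟩

/-- Lifting transitions. -/
lemma lift_trans (hop : Openproc np onp sr) :
    ∀ (n : NetTree IP), WfNetTree n → ∀ s a s', NetMatch n s →
      (pnet np n).trans s a s' →
      NetMatch n s' ∧
      ∀ σ σ' : IP → S,
        (∀ j x, netlift sr s j = some x → σ j = x) →
        (∀ j x, netlift sr s' j = some x → σ' j = x) →
        (a.isLocal → ∀ j, netlift sr s j = none → σ' j = σ j) →
        (opnet onp n).trans (σ, netliftl sr s) a (σ', netliftl sr s') := by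
  intro n
  induction n with
  | node i R0 =>
    rintro _ s a s' hm ht
    cases s with
    | subnet _ _ => exact hm.elim
    | node j ps R =>
      have hji : j = i := hm
      subst hji
      have ht' : NodeSos (np j) j (.node j ps R) a s' := ht
      clear ht
      have hlift : ∀ (q : PS) (R' : Set IP),
          netlift sr (NetState.node j q R') j = some (sr q).1 := by
        intro q R'; simp [netlift]
      have hlift' : ∀ (q : PS) (R' : Set IP) (j' : IP), j' ≠ j →
          netlift (LS := LS) sr (NetState.node j q R') j' = none := by
        intro q R' j' hj'; simp [netlift, hj']
      cases ht' with
      | bcast h =>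
        refine ⟨rfl, fun σ σ' h1 h2 h3 => ?_⟩
        exact OnodeSos.bcast (hop.sim j ps _ _ σ σ' h
          (h1 j _ (hlift ps R)) (h2 j _ (hlift _ R)))
      | gcast h =>
        refine ⟨rfl, fun σ σ' h1 h2 h3 => ?_⟩
        exact OnodeSos.gcast (hop.sim j ps _ _ σ σ' h
          (h1 j _ (hlift ps R)) (h2 j _ (hlift _ R)))
      | ucast hd h =>
        refine ⟨rfl, fun σ σ' h1 h2 h3 => ?_⟩
        exact OnodeSos.ucast hd (hop.sim j ps _ _ σ σ' h
          (h1 j _ (hlift ps R)) (h2 j _ (hlift _ R)))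
      | notucast hd h =>
        refine ⟨rfl, fun σ σ' h1 h2 h3 => ?_⟩
        exact OnodeSos.notucast hd (hop.sim j ps _ _ σ σ' h
          (h1 j _ (hlift ps R)) (h2 j _ (hlift _ R)))
          (fun j' hj' => h3 trivial j' (hlift' ps R j' hj'))
      | deliver h =>
        refine ⟨rfl, fun σ σ' h1 h2 h3 => ?_⟩
        exact OnodeSos.deliver (hop.sim j ps _ _ σ σ' h
          (h1 j _ (hlift ps R)) (h2 j _ (hlift _ R)))
          (fun j' hj' => h3 trivial j' (hlift' ps R j' hj'))
      | tau h =>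
        refine ⟨rfl, fun σ σ' h1 h2 h3 => ?_⟩
        exact OnodeSos.tau (hop.sim j ps _ _ σ σ' h
          (h1 j _ (hlift ps R)) (h2 j _ (hlift _ R)))
          (fun j' hj' => h3 trivial j' (hlift' ps R j' hj'))
      | receive h =>
        refine ⟨rfl, fun σ σ' h1 h2 h3 => ?_⟩
        exact OnodeSos.receive (hop.sim j ps _ _ σ σ' h
          (h1 j _ (hlift ps R)) (h2 j _ (hlift _ R)))
      | not_arrive =>
        refine ⟨rfl, fun σ σ' h1 h2 h3 => ?_⟩
        exact OnodeSos.not_arrive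
          (by rw [h1 j _ (hlift ps R), h2 j _ (hlift ps R)])
      | connect_this =>
        refine ⟨rfl, fun σ σ' h1 h2 h3 => ?_⟩
        exact OnodeSos.connect_this
          (by rw [h1 j _ (hlift ps R), h2 j _ (hlift ps _)])
      | connect_that =>
        refine ⟨rfl, fun σ σ' h1 h2 h3 => ?_⟩
        exact OnodeSos.connect_that
          (by rw [h1 j _ (hlift ps R), h2 j _ (hlift ps _)])
      | connect_other hi' hi'' =>
        refine ⟨rfl, fun σ σ' h1 h2 h3 => ?_⟩
        exact OnodeSos.connect_other hi' hi''
          (by rw [h1 j _ (hlift ps R), h2 j _ (hlift ps R)])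
      | disconnect_this =>
        refine ⟨rfl, fun σ σ' h1 h2 h3 => ?_⟩
        exact OnodeSos.disconnect_this
          (by rw [h1 j _ (hlift ps R), h2 j _ (hlift ps _)])
      | disconnect_that =>
        refine ⟨rfl, fun σ σ' h1 h2 h3 => ?_⟩
        exact OnodeSos.disconnect_that
          (by rw [h1 j _ (hlift ps R), h2 j _ (hlift ps _)])
      | disconnect_other hi' hi'' =>
        refine ⟨rfl, fun σ σ' h1 h2 h3 => ?_⟩
        exact OnodeSos.disconnect_other hi' hi''
          (by rw [h1 j _ (hlift ps R), h2 j _ (hlift ps R)])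
  | par t₁ t₂ ih₁ ih₂ =>
    rintro hwf s a s' hm ht
    obtain ⟨hdisj, hwf₁, hwf₂⟩ := hwf
    cases s with
    | node _ _ _ => exact hm.elim
    | subnet u v =>
      obtain ⟨m₁, m₂⟩ := hm
      have hd : ∀ j, j ∈ netTreeIps t₂ → j ∉ netTreeIps t₁ := fun j hj hj' =>
        Set.eq_empty_iff_forall_notMem.mp hdisj j ⟨hj', hj⟩
      have ht' : PnetSos (pnet np t₁).trans (pnet np t₂).trans (.subnet u v) a s' := ht
      clear ht
      cases ht' with
      | cast_left h₁ h₂ hH hK =>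
        obtain ⟨m₁', f₁⟩ := ih₁ hwf₁ u _ _ m₁ h₁
        obtain ⟨m₂', f₂⟩ := ih₂ hwf₂ v _ _ m₂ h₂
        refine ⟨⟨m₁', m₂'⟩, fun σ σ' h1 h2 h3 => ?_⟩
        exact OpnetSos.cast_left
          (f₁ σ σ' (restrict_left h1) (restrict_left h2) (fun hl => hl.elim))
          (f₂ σ σ' (restrict_right m₁ m₂ hd h1) (restrict_right m₁' m₂' hd h2)
            (fun hl => hl.elim)) hH hK
      | cast_right h₁ h₂ hH hK =>
        obtain ⟨m₁', f₁⟩ := ih₁ hwf₁ u _ _ m₁ h₁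
        obtain ⟨m₂', f₂⟩ := ih₂ hwf₂ v _ _ m₂ h₂
        refine ⟨⟨m₁', m₂'⟩, fun σ σ' h1 h2 h3 => ?_⟩
        exact OpnetSos.cast_right
          (f₁ σ σ' (restrict_left h1) (restrict_left h2) (fun hl => hl.elim))
          (f₂ σ σ' (restrict_right m₁ m₂ hd h1) (restrict_right m₁' m₂' hd h2)
            (fun hl => hl.elim)) hH hK
      | arrive h₁ h₂ =>
        obtain ⟨m₁', f₁⟩ := ih₁ hwf₁ u _ _ m₁ h₁
        obtain ⟨m₂', f₂⟩ := ih₂ hwf₂ v _ _ m₂ h₂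
        refine ⟨⟨m₁', m₂'⟩, fun σ σ' h1 h2 h3 => ?_⟩
        exact OpnetSos.arrive
          (f₁ σ σ' (restrict_left h1) (restrict_left h2) (fun hl => hl.elim))
          (f₂ σ σ' (restrict_right m₁ m₂ hd h1) (restrict_right m₁' m₂' hd h2)
            (fun hl => hl.elim))
      | tau_left h₁ =>
        obtain ⟨m₁', f₁⟩ := ih₁ hwf₁ u _ _ m₁ h₁
        refine ⟨⟨m₁', m₂⟩, fun σ σ' h1 h2 h3 => ?_⟩
        obtain ⟨hp, hside⟩ := pass_left m₁ m₁' m₂ hd h1 h2 (h3 trivial)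
        exact OpnetSos.tau_left
          (f₁ σ σ' (restrict_left h1) (restrict_left h2) (fun _ => hp))
          (by rw [netIps_netliftl, netMatch_ips m₂]; exact hside)
      | tau_right h₂ =>
        obtain ⟨m₂', f₂⟩ := ih₂ hwf₂ v _ _ m₂ h₂
        refine ⟨⟨m₁, m₂'⟩, fun σ σ' h1 h2 h3 => ?_⟩
        obtain ⟨hp, hside⟩ := pass_right m₁ h1 h2 (h3 trivial)
        exact OpnetSos.tau_right
          (f₂ σ σ' (restrict_right m₁ m₂ hd h1) (restrict_right m₁ m₂' hd h2) (fun _ => hp))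
          (by rw [netIps_netliftl, netMatch_ips m₁]; exact hside)
      | deliver_left h₁ =>
        obtain ⟨m₁', f₁⟩ := ih₁ hwf₁ u _ _ m₁ h₁
        refine ⟨⟨m₁', m₂⟩, fun σ σ' h1 h2 h3 => ?_⟩
        obtain ⟨hp, hside⟩ := pass_left m₁ m₁' m₂ hd h1 h2 (h3 trivial)
        exact OpnetSos.deliver_left
          (f₁ σ σ' (restrict_left h1) (restrict_left h2) (fun _ => hp))
          (by rw [netIps_netliftl, netMatch_ips m₂]; exact hside)
      | deliver_right h₂ =>
        obtain ⟨m₂', f₂⟩ := ih₂ hwf₂ v _ _ m₂ h₂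
        refine ⟨⟨m₁, m₂'⟩, fun σ σ' h1 h2 h3 => ?_⟩
        obtain ⟨hp, hside⟩ := pass_right m₁ h1 h2 (h3 trivial)
        exact OpnetSos.deliver_right
          (f₂ σ σ' (restrict_right m₁ m₂ hd h1) (restrict_right m₁ m₂' hd h2) (fun _ => hp))
          (by rw [netIps_netliftl, netMatch_ips m₁]; exact hside)
      | connect h₁ h₂ =>
        obtain ⟨m₁', f₁⟩ := ih₁ hwf₁ u _ _ m₁ h₁
        obtain ⟨m₂', f₂⟩ := ih₂ hwf₂ v _ _ m₂ h₂
        refine ⟨⟨m₁', m₂'⟩, fun σ σ' h1 h2 h3 => ?_⟩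
        exact OpnetSos.connect
          (f₁ σ σ' (restrict_left h1) (restrict_left h2) (fun hl => hl.elim))
          (f₂ σ σ' (restrict_right m₁ m₂ hd h1) (restrict_right m₁' m₂' hd h2)
            (fun hl => hl.elim))
      | disconnect h₁ h₂ =>
        obtain ⟨m₁', f₁⟩ := ih₁ hwf₁ u _ _ m₁ h₁
        obtain ⟨m₂', f₂⟩ := ih₂ hwf₂ v _ _ m₂ h₂
        refine ⟨⟨m₁', m₂'⟩, fun σ σ' h1 h2 h3 => ?_⟩
        exact OpnetSos.disconnect
          (f₁ σ σ' (restrict_left h1) (restrict_left h2) (fun hl => hl.elim))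
          (f₂ σ σ' (restrict_right m₁ m₂ hd h1) (restrict_right m₁' m₂' hd h2)
            (fun hl => hl.elim))

/-- The core of the reachability step case. -/
lemma step_core [Nonempty S] (hop : Openproc np onp sr) {n : NetTree IP}
    (hwf : WfNetTree n) {s s' : NetState PS IP} {a : NodeAction IP MSG DATA}
    (hm : NetMatch n s) (h₀ : (pnet np n).trans s a s') :
    NetMatch n s' ∧
    (∀ j ∉ netIps (netliftl (LS := LS) sr s),
      (netlift sr s' j).getD (someinit np sr j) = (netlift sr s j).getD (someinit np sr j)) ∧
    (opnet onp n).trans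
      (fun j => (netlift sr s j).getD (someinit np sr j), netliftl sr s) a
      (fun j => (netlift sr s' j).getD (someinit np sr j), netliftl sr s') := by
  obtain ⟨hm', flift⟩ := lift_trans hop n hwf s a s' hm h₀
  have hnone : ∀ j, netlift sr s j = none →
      (netlift sr s' j).getD (someinit np sr j) = (netlift sr s j).getD (someinit np sr j) := by
    intro j hj
    have hj' : j ∉ netTreeIps n := by
      intro hmem
      obtain ⟨x, hx⟩ := netlift_isSome (sr := sr) hm hmem
      rw [hj] at hx; cases hx
    rw [netlift_none hm' hj', hj]
  refine ⟨hm', ?_, ?_⟩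
  · intro j hj
    rw [netIps_netliftl, netMatch_ips hm] at hj
    exact hnone j (netlift_none hm hj)
  · refine flift _ _ ?_ ?_ (fun _ => hnone)
    · intro j x hx; rw [hx]; rfl
    · intro j x hx; rw [hx]; rfl

end TransferAux

/-- the transfer lemma. -/
theorem transfer_reachable {S PS LS IP MSG DATA : Type} [DecidableEq IP] [Nonempty S]
    (np : IP → Automaton PS (SeqAction IP MSG DATA))
    (onp : IP → Automaton ((IP → S) × LS) (SeqAction IP MSG DATA))
    (sr : PS → S × LS) (hop : Openproc np onp sr)
    (n : NetTree IP) (hwf : WfNetTree n)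
    (s : NetState PS IP)
    (h : Reachable (closed (pnet np n)) (fun _ => True) s) :
    Oreachable (oclosed (opnet onp n)) (fun _ _ _ => True)
      (other (fun _ _ => True) (netTreeIps n))
      (netgmap np sr s) := by
  have main : NetMatch n s ∧ Oreachable (oclosed (opnet onp n)) (fun _ _ _ => True)
      (other (fun _ _ => True) (netTreeIps n))
      (fun j => (netlift sr s j).getD (someinit np sr j), netliftl sr s) := by
    induction h with
    | @init s hs =>
      obtain ⟨hm, hinit, hσ⟩ := lift_init hop n hwf s hs
      refine ⟨hm, Oreachable.init ?_⟩
      refine hσ _ (fun j x hx => by rw [hx]; rfl) ?_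
      intro j
      cases hx : netlift sr s j with
      | some x =>
        obtain ⟨s0, h0, hx1⟩ := hinit j x hx
        exact ⟨s0, h0, hx1⟩
      | none =>
        have hne := hop.init_notempty j
        have hspec := Classical.epsilon_spec
          (p := fun x => ∃ s0 ∈ (np j).init, x = (sr s0).1)
          ⟨(sr hne.choose).1, hne.choose, hne.choose_spec, rfl⟩
        obtain ⟨s0, h0, he⟩ := hspec
        exact ⟨s0, h0, he⟩
    | @step s s' a hr ht _ ih =>
      obtain ⟨hm, hor⟩ := ih
      have ht' : CnetSos (pnet np n).trans s a s' := ht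
      clear ht
      cases ht' with
      | cast h₀ =>
        obtain ⟨hm', houter, htr⟩ := step_core hop hwf hm h₀
        exact ⟨hm', Oreachable.step hor (OcnetSos.cast houter htr) trivial⟩
      | tau h₀ =>
        obtain ⟨hm', houter, htr⟩ := step_core hop hwf hm h₀
        exact ⟨hm', Oreachable.step hor (OcnetSos.tau houter htr) trivial⟩
      | deliver h₀ =>
        obtain ⟨hm', houter, htr⟩ := step_core hop hwf hm h₀
        exact ⟨hm', Oreachable.step hor (OcnetSos.deliver houter htr) trivial⟩
      | connect h₀ =>
        obtain ⟨hm', houter, htr⟩ := step_core hop hwf hm h₀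
        exact ⟨hm', Oreachable.step hor (OcnetSos.connect houter htr) trivial⟩
      | disconnect h₀ =>
        obtain ⟨hm', houter, htr⟩ := step_core hop hwf hm h₀
        exact ⟨hm', Oreachable.step hor (OcnetSos.disconnect houter htr) trivial⟩
  exact main.2

end AWN
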